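/- For any x ⊆ [n], every element of the set *(x) \ x (positions not in x with signature *) is smaller than every element of x ∩ *(x) (positions in x with signature *). -/
import Mathlib


/-- `c_x(i,j) = |x ∩ [i,j]| - |[i,j] \ x|`. -/
def cfun (x : Finset ℕ) (i j : ℕ) : ℤ :=
  ((Finset.Icc i j ∩ x).card : ℤ) - ((Finset.Icc i j \ x).card : ℤ)

/-- `sg(x)_i = *`: position `i` has no pair in the signature construction. -/
def SgStar (n : ℕ) (x : Finset ℕ) (i : ℕ) : Prop :=
  (i ∈ x ∧ ¬∃ j, i < j ∧ j ≤ n ∧ cfun x i j = 0) ∨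
  (i ∉ x ∧ ¬∃ j, 1 ≤ j ∧ j < i ∧ cfun x j i = 0)

lemma cfun_eq_sum (x : Finset ℕ) (a b : ℕ) :
    cfun x a b = ∑ k ∈ Finset.Icc a b, (if k ∈ x then (1:ℤ) else -1) := by
  classical
  rw [cfun, ← Finset.sum_filter_add_sum_filter_not (Finset.Icc a b) (· ∈ x)]
  rw [Finset.sum_congr rfl (fun k hk => by
    simp only [Finset.mem_filter] at hk; rw [if_pos hk.2])]
  rw [Finset.sum_congr (s₂ := Finset.filter (· ∉ x) (Finset.Icc a b)) rfl (fun k hk => by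
    simp only [Finset.mem_filter] at hk; rw [if_neg hk.2])]
  rw [Finset.sum_const, Finset.sum_const]
  rw [Finset.filter_mem_eq_inter, ← Finset.sdiff_eq_filter]
  push_cast
  ring

lemma cfun_self (x : Finset ℕ) (a : ℕ) :
    cfun x a a = if a ∈ x then 1 else -1 := by
  rw [cfun_eq_sum, Finset.Icc_self, Finset.sum_singleton]

lemma cfun_succ_right (x : Finset ℕ) (a b : ℕ) (h : a ≤ b + 1) :
    cfun x a (b+1) = cfun x a b + (if b+1 ∈ x then 1 else -1) := by
  rw [cfun_eq_sum, cfun_eq_sum,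
    show Finset.Icc a (b+1) = insert (b+1) (Finset.Icc a b) by
      ext k; simp only [Finset.mem_insert, Finset.mem_Icc]; omega,
    Finset.sum_insert (by simp)]
  ring

lemma cfun_succ_left (x : Finset ℕ) (a b : ℕ) (h : a ≤ b) :
    cfun x a b = (if a ∈ x then 1 else -1) + cfun x (a+1) b := by
  rw [cfun_eq_sum, cfun_eq_sum,
    show Finset.Icc a b = insert a (Finset.Icc (a+1) b) by
      ext k; simp only [Finset.mem_insert, Finset.mem_Icc]; omega,
    Finset.sum_insert (by simp)]

lemma cfun_up (x : Finset ℕ) (n j : ℕ) (hj : j ∈ x)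
    (hnoz : ¬∃ k, j < k ∧ k ≤ n ∧ cfun x j k = 0) :
    ∀ k, j ≤ k → k ≤ n → 1 ≤ cfun x j k := by
  intro k
  induction k with
  | zero =>
    intro h1 _
    have : j = 0 := by omega
    subst this
    rw [cfun_self, if_pos hj]
  | succ m ih =>
    intro hjm hmn
    rcases eq_or_lt_of_le hjm with heq | hlt
    · rw [← heq, cfun_self, if_pos hj]
    · have h1 := ih (by omega) (by omega)
      have hstep := cfun_succ_right x j m (by omega)
      have hne : cfun x j (m+1) ≠ 0 := fun h => hnoz ⟨m+1, by omega, by omega, h⟩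
      by_cases hm : m + 1 ∈ x <;> simp [hm] at hstep <;> omega

lemma cfun_down (x : Finset ℕ) (i : ℕ) (hi : i ∉ x)
    (hnoz : ¬∃ k, 1 ≤ k ∧ k < i ∧ cfun x k i = 0) :
    ∀ k, 1 ≤ k → k ≤ i → cfun x k i ≤ -1 := by
  have aux : ∀ d, 1 ≤ i - d → cfun x (i - d) i ≤ -1 := by
    intro d
    induction d with
    | zero =>
      intro _
      simp only [Nat.sub_zero]
      rw [cfun_self, if_neg hi]
    | succ m ih =>
      intro hd
      have h1 : 1 ≤ i - m := by omega
      have h2 := ih h1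
      have hk : i - (m+1) + 1 = i - m := by omega
      have hstep := cfun_succ_left x (i - (m+1)) i (by omega)
      rw [hk] at hstep
      have hne : cfun x (i - (m+1)) i ≠ 0 := fun h =>
        hnoz ⟨i - (m+1), by omega, by omega, h⟩
      by_cases hm : i - (m+1) ∈ x <;> simp [hm] at hstep <;> omega
  intro k hk1 hk2
  have := aux (i - k) (by omega)
  rwa [show i - (i - k) = k by omega] at this

/-- every starred position not in `x` is smaller than every starred
position in `x`. -/
theorem stmt_9 (n : ℕ) (x : Finset ℕ) (hx : x ⊆ Finset.Icc 1 n) :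
    ∀ i ∈ Finset.Icc 1 n, ∀ j ∈ Finset.Icc 1 n,
      SgStar n x i → i ∉ x → SgStar n x j → j ∈ x → i < j := by
  intro i hi j hj hsi hix hsj hjx
  simp only [Finset.mem_Icc] at hi hj
  by_contra hlt
  push_neg at hlt  -- j ≤ i
  rcases hsi with ⟨hix', _⟩ | ⟨_, hnozi⟩
  · exact hix hix'
  rcases hsj with ⟨_, hnozj⟩ | ⟨hjx', _⟩
  swap
  · exact hjx' hjx
  have hup := cfun_up x n j hjx hnozj i hlt hi.2
  have hdown := cfun_down x i hix hnozi j hj.1 hlt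
  omega
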